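/- Let K be a field, m ≥ 3, and R = K[x₁, …, x_m] a polynomial ring. Then for every integer n with 2 ≤ n ≤ (m+1)/2, there exists a trace-0 matrix in Mat_n(R) that is not a commutator; explicitly, one may take the matrix X with first row (x₁, …, x_n), first column (x₁, x_{n+1}, …, x_{2n−1})ᵀ, entry (n,n) equal to −x₁, and all other entries 0. -/

import Mathlib

open Matrix MvPolynomial


private lemma trace_stdBasis_mul' {n : ℕ} {K : Type*} [Field K] (a b : Fin n)
    (Y : Matrix (Fin n) (Fin n) K) :
    Matrix.trace (Matrix.single a b (1:K) * Y) = Y b a := by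
  rw [Matrix.trace, Finset.sum_eq_single a]
  · simp [Matrix.diag]
  · intro i _ hne; simp [Matrix.diag, Matrix.single_mul_apply_of_ne _ _ _ _ _ hne]
  · simp

private lemma mapD_mul' {m n : ℕ} {K : Type*} [Field K] (k : Fin m)
    (M N : Matrix (Fin n) (Fin n) (MvPolynomial (Fin m) K)) :
    (M * N).map (fun p => constantCoeff (pderiv k p)) =
      M.map (fun p => constantCoeff (pderiv k p)) * N.map (constantCoeff (σ := Fin m) (R := K))
      + M.map (constantCoeff (σ := Fin m) (R := K))
        * N.map (fun p => constantCoeff (pderiv k p)) := by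
  ext i j
  simp only [Matrix.map_apply, Matrix.mul_apply, Matrix.add_apply]
  rw [map_sum, map_sum, ← Finset.sum_add_distrib]
  refine Finset.sum_congr rfl fun l _ => ?_
  rw [pderiv_mul]; simp

private lemma mapD_sub' {m n : ℕ} {K : Type*} [Field K] (k : Fin m)
    (M N : Matrix (Fin n) (Fin n) (MvPolynomial (Fin m) K)) :
    (M - N).map (fun p => constantCoeff (pderiv k p)) =
      M.map (fun p => constantCoeff (pderiv k p))
      - N.map (fun p => constantCoeff (pderiv k p)) := by
  ext i j; simp [Matrix.map_apply]

private lemma trace_aux' {n : ℕ} {K : Type*} [Field K]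
    (B0 C0 Bd Cd Y : Matrix (Fin n) (Fin n) K)
    (hYB : Y * B0 = B0 * Y) (hYC : Y * C0 = C0 * Y) :
    Matrix.trace ((Bd * C0 + B0 * Cd - (Cd * B0 + C0 * Bd)) * Y) = 0 := by
  rw [sub_mul, add_mul, add_mul, Matrix.trace_sub, Matrix.trace_add, Matrix.trace_add]
  have e1 : Matrix.trace (B0 * Cd * Y) = Matrix.trace (Cd * B0 * Y) := by
    rw [Matrix.trace_mul_comm (B0 * Cd) Y, ← mul_assoc, hYB,
      Matrix.trace_mul_comm (B0 * Y) Cd, ← mul_assoc]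
  have e2 : Matrix.trace (C0 * Bd * Y) = Matrix.trace (Bd * C0 * Y) := by
    rw [Matrix.trace_mul_comm (C0 * Bd) Y, ← mul_assoc, hYC,
      Matrix.trace_mul_comm (C0 * Y) Bd, ← mul_assoc]
  rw [e1, e2]; ring


/-- Let `K` be a field, `m ≥ 3`, `R = K[x_1, …, x_m]`, and `n` with `2 ≤ n ≤ (m+1)/2`.
Then the matrix with first row `(x_1, …, x_n)`, first column `(x_1, x_{n+1}, …, x_{2n-1})ᵀ`,
entry `(n,n)` equal to `−x_1`, and all other entries `0` (variables being 0-indexed below),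
is a trace-0 matrix in `Mat_n(R)` that is not a commutator. -/
theorem stmt10 (K : Type*) [Field K] (m : ℕ) (hm : 3 ≤ m)
    (n : ℕ) (hn : 2 ≤ n) (hnm : 2 * n ≤ m + 1)
    (A : Matrix (Fin n) (Fin n) (MvPolynomial (Fin m) K))
    (hA : A = Matrix.of fun i j : Fin n =>
      if (i : ℕ) = 0 then MvPolynomial.X ⟨(j : ℕ), by omega⟩
      else if (j : ℕ) = 0 then MvPolynomial.X ⟨n - 1 + (i : ℕ), by omega⟩
      else if (i : ℕ) = n - 1 ∧ (j : ℕ) = n - 1 then - MvPolynomial.X ⟨0, by omega⟩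
      else 0) :
    A.trace = 0 ∧
      ¬ ∃ B C : Matrix (Fin n) (Fin n) (MvPolynomial (Fin m) K), A = B * C - C * B := by
  constructor
  ·
      have hm0 : 0 < m := by omega
      have hzl : (⟨0, by omega⟩ : Fin n) ≠ ⟨n - 1, by omega⟩ := by
        simp only [ne_eq, Fin.mk.injEq]; omega
      rw [Matrix.trace]
      have hdiag : ∀ i : Fin n, Matrix.diag A i =
          (if i = ⟨0, by omega⟩ then X (⟨0, by omega⟩ : Fin m) else 0)
          + (if i = ⟨n - 1, by omega⟩ then -X (⟨0, by omega⟩ : Fin m) else 0) := by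
        intro i
        rw [hA]
        simp only [Matrix.diag_apply, Matrix.of_apply]
        by_cases h1 : (i : ℕ) = 0
        · have hiz : i = ⟨0, by omega⟩ := by simp [Fin.ext_iff, h1]
          have hil : i ≠ ⟨n - 1, by omega⟩ := by simp [Fin.ext_iff]; omega
          rw [if_pos h1, if_pos hiz, if_neg hil, add_zero]
          congr 1
          simp [Fin.ext_iff, h1]
        · rw [if_neg h1, if_neg h1]
          have hiz : i ≠ ⟨0, by omega⟩ := by simp [Fin.ext_iff, h1]
          rw [if_neg hiz, zero_add]
          by_cases h2 : (i : ℕ) = n - 1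
          · have hil : i = ⟨n - 1, by omega⟩ := by simp [Fin.ext_iff, h2]
            rw [if_pos ⟨h2, h2⟩, if_pos hil]
          · have hil : i ≠ ⟨n - 1, by omega⟩ := by simp [Fin.ext_iff, h2]
            rw [if_neg (by tauto), if_neg hil]
      calc ∑ i, Matrix.diag A i
          = ∑ i : Fin n, ((if i = ⟨0, by omega⟩ then X (⟨0, by omega⟩ : Fin m) else 0)
            + (if i = ⟨n - 1, by omega⟩ then -X (⟨0, by omega⟩ : Fin m) else 0)) :=
            Finset.sum_congr rfl fun i _ => hdiag i
        _ = 0 := by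
            rw [Finset.sum_add_distrib, Finset.sum_ite_eq' Finset.univ,
              Finset.sum_ite_eq' Finset.univ]
            simp
  ·
      rintro ⟨B, C, hBC⟩
      have hm0 : 0 < m := by omega
      -- constant parts
      have hA0 : A.map (constantCoeff (σ := Fin m) (R := K)) = 0 := by
        rw [hA]; ext a b
        simp only [Matrix.map_apply, Matrix.of_apply, Matrix.zero_apply]
        split_ifs <;> simp
      have h0 : B.map (constantCoeff (σ := Fin m) (R := K)) * C.map constantCoeff
          = C.map (constantCoeff (σ := Fin m) (R := K)) * B.map constantCoeff := by
        have h1 : (B * C - C * B).map (constantCoeff (σ := Fin m) (R := K)) = 0 := by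
          rw [← hBC]; exact hA0
        rw [Matrix.map_sub _ (fun a b => map_sub constantCoeff a b),
          Matrix.map_mul, Matrix.map_mul, sub_eq_zero] at h1
        exact h1
      -- the key trace identity
      have key : ∀ (k : Fin m) (Y : Matrix (Fin n) (Fin n) K),
          Y * B.map constantCoeff = B.map constantCoeff * Y →
          Y * C.map constantCoeff = C.map constantCoeff * Y →
          Matrix.trace (A.map (fun p => constantCoeff (pderiv k p)) * Y) = 0 := by
        intro k Y hYB hYC
        rw [hBC, mapD_sub', mapD_mul', mapD_mul']
        exact trace_aux' _ _ _ _ Y hYB hYC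
      -- explicit coefficient matrices of A
      have hrow : ∀ j : Fin n, (j : ℕ) ≠ 0 →
          A.map (fun p => constantCoeff (pderiv (⟨(j : ℕ), by omega⟩ : Fin m) p))
            = Matrix.single (⟨0, by omega⟩ : Fin n) j (1 : K) := by
        intro j hj
        rw [hA]; ext a b
        simp only [Matrix.map_apply, Matrix.of_apply]
        by_cases h1 : (a : ℕ) = 0
        · have haz : a = ⟨0, by omega⟩ := by simp [Fin.ext_iff, h1]
          rw [if_pos h1]
          by_cases hb : b = j
          · have : (⟨(b : ℕ), by omega⟩ : Fin m) = ⟨(j : ℕ), by omega⟩ := by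
              simp [Fin.ext_iff, hb]
            rw [this, pderiv_X_self, haz, hb, Matrix.single_apply_same]
            simp
          · have hne : (⟨(b : ℕ), by omega⟩ : Fin m) ≠ ⟨(j : ℕ), by omega⟩ := by
              simp only [ne_eq, Fin.mk.injEq]
              exact fun h => hb (Fin.ext h)
            rw [pderiv_X_of_ne hne,
              Matrix.single_apply_of_col_ne _ _ (Ne.symm hb)]
            simp
        · have haz : (⟨0, by omega⟩ : Fin n) ≠ a := by simp [Fin.ext_iff]; omega
          rw [Matrix.single_apply_of_row_ne haz, if_neg h1]
          by_cases h2 : (b : ℕ) = 0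
          · rw [if_pos h2]
            have hne : (⟨n - 1 + (a : ℕ), by omega⟩ : Fin m) ≠ ⟨(j : ℕ), by omega⟩ := by
              simp only [ne_eq, Fin.mk.injEq]
              have := j.isLt
              omega
            rw [pderiv_X_of_ne hne]; simp
          · rw [if_neg h2]
            by_cases h3 : (a : ℕ) = n - 1 ∧ (b : ℕ) = n - 1
            · rw [if_pos h3, map_neg]
              have hne : (⟨0, by omega⟩ : Fin m) ≠ ⟨(j : ℕ), by omega⟩ := by
                simp only [ne_eq, Fin.mk.injEq]
                omega
              rw [pderiv_X_of_ne hne]; simp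
            · rw [if_neg h3]; simp
      have hcol : ∀ i : Fin n, (i : ℕ) ≠ 0 →
          A.map (fun p => constantCoeff (pderiv (⟨n - 1 + (i : ℕ), by omega⟩ : Fin m) p))
            = Matrix.single i (⟨0, by omega⟩ : Fin n) (1 : K) := by
        intro i hi
        rw [hA]; ext a b
        simp only [Matrix.map_apply, Matrix.of_apply]
        by_cases h1 : (a : ℕ) = 0
        · have haz : i ≠ a := by simp [Fin.ext_iff]; omega
          rw [if_pos h1, Matrix.single_apply_of_row_ne haz]
          have hne : (⟨(b : ℕ), by omega⟩ : Fin m) ≠ ⟨n - 1 + (i : ℕ), by omega⟩ := by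
            simp only [ne_eq, Fin.mk.injEq]
            have := b.isLt
            omega
          rw [pderiv_X_of_ne hne]; simp
        · rw [if_neg h1]
          by_cases h2 : (b : ℕ) = 0
          · have hbz : b = ⟨0, by omega⟩ := by simp [Fin.ext_iff, h2]
            rw [if_pos h2]
            by_cases ha : a = i
            · have : (⟨n - 1 + (a : ℕ), by omega⟩ : Fin m) = ⟨n - 1 + (i : ℕ), by omega⟩ := by
                simp [Fin.ext_iff, ha]
              rw [this, pderiv_X_self, ha, hbz, Matrix.single_apply_same]
              simp
            · have hne : (⟨n - 1 + (a : ℕ), by omega⟩ : Fin m) ≠ ⟨n - 1 + (i : ℕ), by omega⟩ := by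
                simp only [ne_eq, Fin.mk.injEq]
                exact fun h => ha (Fin.ext (by omega))
              rw [pderiv_X_of_ne hne,
                Matrix.single_apply_of_row_ne (Ne.symm ha)]
              simp
          · rw [if_neg h2]
            have hbz : (⟨0, by omega⟩ : Fin n) ≠ b := by simp [Fin.ext_iff]; omega
            rw [Matrix.single_apply_of_col_ne _ _ hbz]
            by_cases h3 : (a : ℕ) = n - 1 ∧ (b : ℕ) = n - 1
            · rw [if_pos h3, map_neg]
              have hne : (⟨0, by omega⟩ : Fin m) ≠ ⟨n - 1 + (i : ℕ), by omega⟩ := by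
                simp only [ne_eq, Fin.mk.injEq]
                omega
              rw [pderiv_X_of_ne hne]; simp
            · rw [if_neg h3]; simp
      have hdm : A.map (fun p => constantCoeff (pderiv (⟨0, by omega⟩ : Fin m) p))
          = Matrix.single (⟨0, by omega⟩ : Fin n) (⟨0, by omega⟩ : Fin n) (1 : K)
            - Matrix.single (⟨n - 1, by omega⟩ : Fin n) (⟨n - 1, by omega⟩ : Fin n) (1 : K) := by
        rw [hA]; ext a b
        simp only [Matrix.map_apply, Matrix.of_apply, Matrix.sub_apply]
        by_cases h1 : (a : ℕ) = 0
        · have haz : a = ⟨0, by omega⟩ := by simp [Fin.ext_iff, h1]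
          have hal : (⟨n - 1, by omega⟩ : Fin n) ≠ a := by simp [Fin.ext_iff]; omega
          rw [if_pos h1, Matrix.single_apply_of_row_ne hal, sub_zero]
          by_cases hb : (b : ℕ) = 0
          · have hbz : b = ⟨0, by omega⟩ := by simp [Fin.ext_iff, hb]
            have : (⟨(b : ℕ), by omega⟩ : Fin m) = ⟨0, by omega⟩ := by simp [Fin.ext_iff, hb]
            rw [this, pderiv_X_self, haz, hbz, Matrix.single_apply_same]
            simp
          · have hne : (⟨(b : ℕ), by omega⟩ : Fin m) ≠ ⟨0, by omega⟩ := by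
              simp only [ne_eq, Fin.mk.injEq]; omega
            have hbz : b ≠ ⟨0, by omega⟩ := by simp [Fin.ext_iff]; omega
            rw [pderiv_X_of_ne hne,
              Matrix.single_apply_of_col_ne _ _ (Ne.symm hbz)]
            simp
        · have haz : (⟨0, by omega⟩ : Fin n) ≠ a := by simp [Fin.ext_iff]; omega
          rw [if_neg h1, Matrix.single_apply_of_row_ne haz, zero_sub]
          by_cases h2 : (b : ℕ) = 0
          · rw [if_pos h2]
            have hne : (⟨n - 1 + (a : ℕ), by omega⟩ : Fin m) ≠ ⟨0, by omega⟩ := by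
              simp only [ne_eq, Fin.mk.injEq]; omega
            have hbl : (⟨n - 1, by omega⟩ : Fin n) ≠ b := by simp [Fin.ext_iff]; omega
            rw [pderiv_X_of_ne hne, Matrix.single_apply_of_col_ne _ _ hbl]
            simp
          · rw [if_neg h2]
            by_cases h3 : (a : ℕ) = n - 1 ∧ (b : ℕ) = n - 1
            · have hval : Matrix.single (⟨n - 1, by omega⟩ : Fin n)
                  (⟨n - 1, by omega⟩ : Fin n) (1 : K) a b = 1 := by
                simp [Matrix.single, Fin.ext_iff, h3.1, h3.2]
              rw [if_pos h3, map_neg, pderiv_X_self, hval]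
              simp
            · have : ¬((⟨n - 1, by omega⟩ : Fin n) = a ∧ (⟨n - 1, by omega⟩ : Fin n) = b) := by
                simp only [Fin.ext_iff]
                omega
              rw [if_neg h3, Matrix.single_apply_of_ne _ _ _ _ _ this]
              simp
      -- row and column facts for the constant parts
      have hBcol : ∀ j : Fin n, (j : ℕ) ≠ 0 →
          (B.map (constantCoeff (σ := Fin m) (R := K))) j ⟨0, by omega⟩ = 0 := by
        intro j hj
        have := key ⟨(j : ℕ), by omega⟩ (B.map constantCoeff) rfl h0
        rwa [hrow j hj, trace_stdBasis_mul'] at this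
      have hBrow : ∀ i : Fin n, (i : ℕ) ≠ 0 →
          (B.map (constantCoeff (σ := Fin m) (R := K))) ⟨0, by omega⟩ i = 0 := by
        intro i hi
        have := key ⟨n - 1 + (i : ℕ), by omega⟩ (B.map constantCoeff) rfl h0
        rwa [hcol i hi, trace_stdBasis_mul'] at this
      have hCcol : ∀ j : Fin n, (j : ℕ) ≠ 0 →
          (C.map (constantCoeff (σ := Fin m) (R := K))) j ⟨0, by omega⟩ = 0 := by
        intro j hj
        have := key ⟨(j : ℕ), by omega⟩ (C.map constantCoeff) h0.symm rfl
        rwa [hrow j hj, trace_stdBasis_mul'] at this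
      have hCrow : ∀ i : Fin n, (i : ℕ) ≠ 0 →
          (C.map (constantCoeff (σ := Fin m) (R := K))) ⟨0, by omega⟩ i = 0 := by
        intro i hi
        have := key ⟨n - 1 + (i : ℕ), by omega⟩ (C.map constantCoeff) h0.symm rfl
        rwa [hcol i hi, trace_stdBasis_mul'] at this
      -- E₀₀ commutes with both constant parts
      have hcomm : ∀ M : Matrix (Fin n) (Fin n) K,
          (∀ j : Fin n, (j : ℕ) ≠ 0 → M j ⟨0, by omega⟩ = 0) →
          (∀ i : Fin n, (i : ℕ) ≠ 0 → M ⟨0, by omega⟩ i = 0) →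
          Matrix.single (⟨0, by omega⟩ : Fin n) (⟨0, by omega⟩ : Fin n) (1 : K) * M
            = M * Matrix.single (⟨0, by omega⟩ : Fin n) (⟨0, by omega⟩ : Fin n) (1 : K) := by
        intro M hc hr
        ext a b
        by_cases ha : a = ⟨0, by omega⟩
        · by_cases hb : b = ⟨0, by omega⟩
          · rw [ha, hb, Matrix.single_mul_apply_same,
              Matrix.mul_single_apply_same, one_mul, mul_one]
          · rw [ha, Matrix.single_mul_apply_same, one_mul,
              Matrix.mul_single_apply_of_ne _ _ _ _ _ hb,
              hr b (by simpa [Fin.ext_iff] using hb)]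
        · by_cases hb : b = ⟨0, by omega⟩
          · rw [hb, Matrix.mul_single_apply_same,
              Matrix.single_mul_apply_of_ne _ _ _ _ _ ha,
              hc a (by simpa [Fin.ext_iff] using ha), zero_mul]
          · rw [Matrix.single_mul_apply_of_ne _ _ _ _ _ ha,
              Matrix.mul_single_apply_of_ne _ _ _ _ _ hb]
      -- endgame
      have hfin := key ⟨0, by omega⟩
          (Matrix.single (⟨0, by omega⟩ : Fin n) (⟨0, by omega⟩ : Fin n) (1 : K))
          (hcomm _ hBcol hBrow) (hcomm _ hCcol hCrow)
      rw [hdm, sub_mul, Matrix.trace_sub, trace_stdBasis_mul', trace_stdBasis_mul',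
        Matrix.single_apply_same,
        Matrix.single_apply_of_ne _ _ _ _ _ (by simp [Fin.ext_iff]; omega)] at hfin
      simpa using hfin
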